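/- Let ν be a Borel probability measure on a compact interval [a, b] ⊂ ℝ, absolutely continuous with respect to Lebesgue measure with strictly positive continuous density, and let G(y) := ν([a, y]) with quantile function G⁻¹. Let ψ : ℝ → ℝ be strictly convex and differentiable, fix m ∈ (a, b), and set B(u) := ψ(G⁻¹(u)) − ψ(m) − (G⁻¹(u) − m)·ψ'(m) for u ∈ [0, 1]. For ε > 0 let p_ε be the probability density on [0, 1] proportional to exp(−B(u)/ε). Then as ε → 0⁺: (i) ∫₀¹ u p_ε(u) du → G(m), and (ii) ∫₀¹ (u − ∫₀¹ u' p_ε(u') du')² p_ε(u) du → 0; that is, the conditional rank distribution concentrates at rank G(m) with vanishing variance (rank stickiness). -/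

import Mathlib

open MeasureTheory
open scoped ENNReal

section Aux
open Set Filter
open scoped Topology
set_option maxHeartbeats 1000000


lemma bregman_pos {ψ : ℝ → ℝ} (hψd : Differentiable ℝ ψ)
    (hψc : StrictConvexOn ℝ Set.univ ψ) (m : ℝ) :
    ∀ y, y ≠ m → 0 < ψ y - ψ m - (y - m) * deriv ψ m := by
  intro y hy
  rcases lt_or_gt_of_ne hy with h | h
  · have h' := hψc.slope_lt_deriv (mem_univ y) (mem_univ m) h (hψd m)
    rw [slope_def_field] at h'
    have h2 : ψ m - ψ y < deriv ψ m * (m - y) := (div_lt_iff₀ (by linarith)).mp h'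
    nlinarith
  · have h' := hψc.deriv_lt_slope (mem_univ m) (mem_univ y) h (hψd m)
    rw [slope_def_field] at h'
    have h2 : deriv ψ m * (y - m) < ψ y - ψ m := (lt_div_iff₀ (by linarith)).mp h'
    nlinarith

lemma bregman_nonneg {ψ : ℝ → ℝ} (hψd : Differentiable ℝ ψ)
    (hψc : StrictConvexOn ℝ Set.univ ψ) (m : ℝ) :
    ∀ y, 0 ≤ ψ y - ψ m - (y - m) * deriv ψ m := by
  intro y
  rcases eq_or_ne y m with h | h
  · simp [h]
  · exact (bregman_pos hψd hψc m y h).le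


lemma laplace_cont {F : ℝ → ℝ} (hF : ContinuousOn F (Icc 0 1)) (ε : ℝ) :
    ContinuousOn (fun u => Real.exp (-F u / ε)) (Icc 0 1) :=
  Real.continuous_exp.comp_continuousOn (hF.neg.div_const ε)

lemma laplace_denom_pos {F : ℝ → ℝ} (hF : ContinuousOn F (Icc 0 1)) (ε : ℝ) :
    0 < ∫ u in Icc (0:ℝ) 1, Real.exp (-F u / ε) := by
  obtain ⟨x₀, hx₀, hmin⟩ :=
    isCompact_Icc.exists_isMinOn (nonempty_Icc.mpr zero_le_one) (laplace_cont hF ε)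
  have h1 : Real.exp (-F x₀ / ε) * (volume (Icc (0:ℝ) 1)).toReal
      ≤ ∫ u in Icc (0:ℝ) 1, Real.exp (-F u / ε) :=
    setIntegral_ge_of_const_le_real measurableSet_Icc (by simp [Real.volume_Icc])
      (fun x hx => isMinOn_iff.mp hmin x hx) ((laplace_cont hF ε).integrableOn_Icc)
  have h2 : (volume (Icc (0:ℝ) 1)).toReal = 1 := by simp [Real.volume_Icc]
  rw [h2, mul_one] at h1
  exact lt_of_lt_of_le (Real.exp_pos _) h1

noncomputable def lapI (F : ℝ → ℝ) (ε : ℝ) : ℝ :=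
  ∫ u in Icc (0:ℝ) 1, Real.exp (-F u / ε)

noncomputable def lapφ (F : ℝ → ℝ) (ε u : ℝ) : ℝ :=
  Real.exp (-F u / ε) / lapI F ε

lemma laplace_ratio {F f : ℝ → ℝ} (hF : ContinuousOn F (Icc 0 1))
    {u₀ : ℝ} (hu₀ : u₀ ∈ Ioo (0:ℝ) 1)
    (hFz : F u₀ = 0) (hFpos : ∀ u ∈ Icc (0:ℝ) 1, u ≠ u₀ → 0 < F u)
    (hf : Continuous f) :
    Tendsto (fun ε => (∫ u in Icc (0:ℝ) 1, f u * Real.exp (-F u / ε)) /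
      ∫ u in Icc (0:ℝ) 1, Real.exp (-F u / ε)) (𝓝[>] (0:ℝ)) (𝓝 (f u₀)) := by
  have hIpos : ∀ ε, 0 < lapI F ε := laplace_denom_pos hF
  have hwc : ∀ ε, ContinuousOn (fun u => Real.exp (-F u / ε)) (Icc 0 1) := laplace_cont hF
  have key : Tendsto (fun ε => ∫ u in Icc (0:ℝ) 1, lapφ F ε u • f u)
      (𝓝[>] (0:ℝ)) (𝓝 (f u₀)) := by
    apply tendsto_setIntegral_peak_smul_of_integrableOn_of_tendsto
      measurableSet_Icc measurableSet_Icc subset_rfl self_mem_nhdsWithin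
      (by rw [Real.volume_Icc]; exact ENNReal.ofReal_ne_top)
    · -- nonneg
      filter_upwards with ε x _
      exact div_nonneg (Real.exp_pos _).le (hIpos ε).le
    · -- uniform convergence away from u₀
      intro v hv hv₀
      rcases (Icc (0:ℝ) 1 \ v).eq_empty_or_nonempty with hK | hK
      · rw [hK]; exact tendstoUniformlyOn_empty
      have hKc : IsCompact (Icc (0:ℝ) 1 \ v) := isCompact_Icc.diff hv
      obtain ⟨xm, hxm, hxmin⟩ := hKc.exists_isMinOn hK (hF.mono diff_subset)
      have hcpos : 0 < F xm := hFpos xm hxm.1 (fun h => hxm.2 (h ▸ hv₀))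
      set c := F xm with hc
      -- find a small interval around u₀ where F < c/2
      have h1 : Icc (0:ℝ) 1 ∈ 𝓝 u₀ := Icc_mem_nhds hu₀.1 hu₀.2
      have hFc : Tendsto F (𝓝 u₀) (𝓝 0) := by
        have h2 := hF u₀ (Ioo_subset_Icc_self hu₀)
        rw [ContinuousWithinAt, nhdsWithin_eq_nhds.mpr h1, hFz] at h2
        exact h2
      have h3 : ∀ᶠ u in 𝓝 u₀, F u < c / 2 := hFc.eventually (gt_mem_nhds (half_pos hcpos))
      obtain ⟨θ, hθpos, hball⟩ := Metric.mem_nhds_iff.mp (Filter.inter_mem h1 h3)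
      have hJsub : Icc (u₀ - θ/2) (u₀ + θ/2) ⊆ Icc (0:ℝ) 1 ∩ {u | F u < c/2} := by
        intro x hx
        have hx' : x ∈ Metric.ball u₀ θ := by
          rw [Metric.mem_ball, Real.dist_eq, abs_sub_lt_iff]
          exact ⟨by linarith [hx.2], by linarith [hx.1]⟩
        exact hball hx'
      have hJI : ∀ ε : ℝ, 0 < ε → Real.exp (-(c/2) / ε) * (θ/2 + θ/2) ≤ lapI F ε := by
        intro ε hε
        have hmeasJ : (volume (Icc (u₀ - θ/2) (u₀ + θ/2))).toReal = θ/2 + θ/2 := by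
          rw [Real.volume_Icc, ENNReal.toReal_ofReal (by linarith)]
          ring
        have h4 : ∀ x ∈ Icc (u₀ - θ/2) (u₀ + θ/2),
            Real.exp (-(c/2)/ε) ≤ Real.exp (-F x / ε) := by
          intro x hx
          have h5 : F x < c/2 := (hJsub hx).2
          apply Real.exp_le_exp.mpr
          gcongr
        calc Real.exp (-(c/2)/ε) * (θ/2 + θ/2)
            = Real.exp (-(c/2)/ε) * (volume (Icc (u₀ - θ/2) (u₀ + θ/2))).toReal := by
              rw [hmeasJ]
          _ ≤ ∫ x in Icc (u₀ - θ/2) (u₀ + θ/2), Real.exp (-F x / ε) :=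
              setIntegral_ge_of_const_le_real measurableSet_Icc
                (by rw [Real.volume_Icc]; exact ENNReal.ofReal_ne_top) h4
                (((hwc ε).mono (hJsub.trans inter_subset_left)).integrableOn_Icc)
          _ ≤ lapI F ε := setIntegral_mono_set ((hwc ε).integrableOn_Icc)
                (Filter.Eventually.of_forall fun x => (Real.exp_pos _).le)
                ((hJsub.trans inter_subset_left).eventuallyLE)
      rw [Metric.tendstoUniformlyOn_iff]
      intro δ hδ
      have hrt : Tendsto (fun ε : ℝ => Real.exp (-(c/2)/ε) / θ) (𝓝[>] (0:ℝ)) (𝓝 0) := by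
        have h6 : Tendsto (fun ε : ℝ => (c/2) * ε⁻¹) (𝓝[>] (0:ℝ)) atTop :=
          tendsto_inv_nhdsGT_zero.const_mul_atTop (half_pos hcpos)
        have h7 : Tendsto (fun ε : ℝ => -(c/2)/ε) (𝓝[>] (0:ℝ)) atBot := by
          have h8 : (fun ε : ℝ => -(c/2)/ε) = fun ε : ℝ => -((c/2) * ε⁻¹) := by
            funext ε; ring
          rw [h8]
          exact tendsto_neg_atBot_iff.mpr h6
        simpa using (Real.tendsto_exp_atBot.comp h7).div_const θ
      filter_upwards [hrt.eventually (gt_mem_nhds hδ), self_mem_nhdsWithin] with ε hrδ hε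
      intro x hx
      have hε' : (0:ℝ) < ε := hε
      have hcF : c ≤ F x := isMinOn_iff.mp hxmin x hx
      have hxnum : Real.exp (-F x / ε) ≤ Real.exp (-c / ε) := by
        apply Real.exp_le_exp.mpr
        gcongr
      have hId : Real.exp (-(c/2)/ε) * (θ/2 + θ/2) ≤ lapI F ε := hJI ε hε'
      have h8 : lapφ F ε x ≤ Real.exp (-c/ε) / (Real.exp (-(c/2)/ε) * (θ/2 + θ/2)) :=
        div_le_div₀ (Real.exp_pos _).le hxnum
          (mul_pos (Real.exp_pos _) (by linarith)) hId
      have h9 : Real.exp (-c/ε) / (Real.exp (-(c/2)/ε) * (θ/2 + θ/2))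
          = Real.exp (-(c/2)/ε) / θ := by
        rw [div_mul_eq_div_div, ← Real.exp_sub,
          show -c/ε - -(c/2)/ε = -(c/2)/ε by ring, add_halves]
      have h11 : (0:ℝ) ≤ lapφ F ε x := div_nonneg (Real.exp_pos _).le (hIpos ε).le
      rw [Pi.zero_apply, dist_zero_left, Real.norm_eq_abs, abs_of_nonneg h11]
      exact lt_of_le_of_lt (h8.trans_eq h9) hrδ
    · -- integral tends to 1
      have h5 : ∀ ε : ℝ, ∫ u in Icc (0:ℝ) 1, lapφ F ε u = 1 := by
        intro ε
        unfold lapφ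
        rw [integral_div]
        exact div_self (hIpos ε).ne'
      simp only [h5]
      exact tendsto_const_nhds
    · filter_upwards with ε
      have hm : AEStronglyMeasurable (lapφ F ε) (volume.restrict (Icc (0:ℝ) 1)) := by
        unfold lapφ
        exact ((hwc ε).div_const (lapI F ε)).aestronglyMeasurable measurableSet_Icc
      exact hm
    · exact hf.integrableOn_Icc
    · exact (hf.tendsto u₀).mono_left nhdsWithin_le_nhds
  refine key.congr' (eventuallyEq_of_mem self_mem_nhdsWithin fun ε hε => ?_)
  rw [show (fun u => lapφ F ε u • f u) = fun u => (f u * Real.exp (-F u / ε)) / lapI F ε by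
    funext u; rw [smul_eq_mul]; unfold lapφ; ring, integral_div]
  rfl

lemma expand_second_moment (w : ℝ → ℝ) (hw : ContinuousOn w (Icc 0 1)) (p q : ℝ) :
    (∫ u in Icc (0:ℝ) 1, (u - q)^2 * w u)
      = (∫ u in Icc (0:ℝ) 1, (u - p)^2 * w u)
        + ((2*(p - q)) * ((∫ u in Icc (0:ℝ) 1, u * w u) - p * ∫ u in Icc (0:ℝ) 1, w u)
        + (p - q)^2 * ∫ u in Icc (0:ℝ) 1, w u) := by
  have hint3 : IntegrableOn w (Icc 0 1) volume := hw.integrableOn_Icc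
  have hint2 : IntegrableOn (fun u => u * w u) (Icc 0 1) volume :=
    (continuousOn_id.mul hw).integrableOn_Icc
  have hint1 : IntegrableOn (fun u => (u - p)^2 * w u) (Icc 0 1) volume :=
    (((continuousOn_id.sub continuousOn_const).pow 2).mul hw).integrableOn_Icc
  rw [show (fun u => (u - q)^2 * w u) = fun u =>
      (u - p)^2 * w u + ((2*(p - q)) * (u * w u - p * w u) + (p - q)^2 * w u) from
    funext fun u => by ring]
  have cS : ContinuousOn (fun u => u * w u - p * w u) (Icc 0 1) :=
    (continuousOn_id.mul hw).sub (continuousOn_const.mul hw)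
  have cCS : ContinuousOn (fun u => 2*(p - q) * (u * w u - p * w u)) (Icc 0 1) :=
    continuousOn_const.mul cS
  have cP : ContinuousOn (fun u => (p - q)^2 * w u) (Icc 0 1) :=
    continuousOn_const.mul hw
  have cSum : ContinuousOn
      (fun u => 2*(p - q) * (u * w u - p * w u) + (p - q)^2 * w u) (Icc 0 1) :=
    cCS.add cP
  rw [integral_add hint1 cSum.integrableOn_Icc,
    integral_add cCS.integrableOn_Icc cP.integrableOn_Icc,
    integral_const_mul _ _, integral_const_mul _ _,
    integral_sub (g := fun u => p * w u) hint2 (continuousOn_const.mul hw).integrableOn_Icc,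
    integral_const_mul _ _]

end Aux

section Main
open Set Filter
open scoped Topology
set_option maxHeartbeats 1000000

/-- rank stickiness: for `ν` absolutely continuous on `[a, b]` with
strictly positive continuous density, `G` its CDF and `G⁻¹` its quantile function,
`ψ` strictly convex and differentiable, `m ∈ (a, b)`, and
`B(u) = ψ(G⁻¹ u) - ψ m - (G⁻¹ u - m)·ψ'(m)` the Bregman exponent, the probability
density on `[0,1]` proportional to `exp(-B(u)/ε)` has mean tending to `G(m)` and
variance tending to `0` as `ε → 0⁺`. -/
theorem stmt9 (a b : ℝ) (hab : a < b)
    (ν : Measure ℝ) [IsProbabilityMeasure ν]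
    (g : ℝ → ℝ) (hgc : ContinuousOn g (Set.Icc a b))
    (hgpos : ∀ y ∈ Set.Icc a b, 0 < g y)
    (hν : ν = (volume.restrict (Set.Icc a b)).withDensity
      fun y => ENNReal.ofReal (g y))
    (G : ℝ → ℝ) (hG : G = fun y => (ν (Set.Icc a y)).toReal)
    (Ginv : ℝ → ℝ) (hGinv : Ginv = fun u => sInf {y : ℝ | u ≤ G y})
    (ψ : ℝ → ℝ) (hψd : Differentiable ℝ ψ) (hψc : StrictConvexOn ℝ Set.univ ψ)
    (m : ℝ) (hm : m ∈ Set.Ioo a b)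
    (B : ℝ → ℝ)
    (hB : B = fun u => ψ (Ginv u) - ψ m - (Ginv u - m) * deriv ψ m)
    (mean : ℝ → ℝ)
    (hmean : mean = fun ε =>
      (∫ u in Set.Icc (0 : ℝ) 1, u * Real.exp (-B u / ε))
        / ∫ u in Set.Icc (0 : ℝ) 1, Real.exp (-B u / ε)) :
    Filter.Tendsto mean (nhdsWithin 0 (Set.Ioi 0)) (nhds (G m)) ∧
    Filter.Tendsto
      (fun ε : ℝ =>
        (∫ u in Set.Icc (0 : ℝ) 1, (u - mean ε) ^ 2 * Real.exp (-B u / ε))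
          / ∫ u in Set.Icc (0 : ℝ) 1, Real.exp (-B u / ε))
      (nhdsWithin 0 (Set.Ioi 0)) (nhds 0) := by
  classical
  obtain ⟨ha, hb⟩ := hm
  -- basic representation of ν
  have hνs : ∀ s : Set ℝ, MeasurableSet s →
      ν s = ∫⁻ t in s ∩ Icc a b, ENNReal.ofReal (g t) := by
    intro s hs
    rw [hν, withDensity_apply _ hs, Measure.restrict_restrict hs]
  have hfin : ∀ s : Set ℝ, ν s ≠ ⊤ := fun s => measure_ne_top ν s
  -- positivity of ν on intervals inside [a,b]
  have hIocpos : ∀ y y' : ℝ, a ≤ y → y < y' → y' ≤ b → 0 < ν (Ioc y y') := by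
    intro y y' hay hyy hy'b
    rw [hνs _ measurableSet_Ioc]
    have hsub : Ioc y y' ∩ Icc a b = Ioc y y' :=
      inter_eq_left.mpr (fun t ht => ⟨by linarith [ht.1], by linarith [ht.2]⟩)
    rw [hsub]
    obtain ⟨t₀, ht₀, hmin⟩ := isCompact_Icc.exists_isMinOn (nonempty_Icc.mpr hyy.le)
      (hgc.mono (Icc_subset_Icc hay hy'b))
    have hgt₀ : 0 < g t₀ := hgpos t₀ ⟨by linarith [ht₀.1], by linarith [ht₀.2]⟩
    calc (0:ℝ≥0∞) < ENNReal.ofReal (g t₀) * volume (Ioc y y') := by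
          refine ENNReal.mul_pos ?_ ?_
          · exact (ENNReal.ofReal_pos.mpr hgt₀).ne'
          · rw [Real.volume_Ioc]
            exact (ENNReal.ofReal_pos.mpr (by linarith)).ne'
      _ = ∫⁻ _ in Ioc y y', ENNReal.ofReal (g t₀) := by
          rw [setLIntegral_const, mul_comm]
      _ ≤ ∫⁻ t in Ioc y y', ENNReal.ofReal (g t) := by
          apply setLIntegral_mono' measurableSet_Ioc
          intro t ht
          exact ENNReal.ofReal_le_ofReal (isMinOn_iff.mp hmin t (Ioc_subset_Icc_self ht))
  -- additivity
  have hadd : ∀ y y' : ℝ, a ≤ y → y ≤ y' →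
      G y' = G y + (ν (Ioc y y')).toReal := by
    intro y y' hay hyy
    rw [hG]
    simp only
    rw [← Icc_union_Ioc_eq_Icc hay hyy,
      measure_union (disjoint_left.mpr fun t ht ht' => ht'.1.not_ge ht.2) measurableSet_Ioc,
      ENNReal.toReal_add (hfin _) (hfin _)]
  have hGmono : Monotone G := by
    intro y y' h
    rw [hG]
    exact ENNReal.toReal_mono (hfin _) (measure_mono (Icc_subset_Icc_right h))
  have hGa : G a = 0 := by
    rw [hG]
    simp only [Icc_self]
    rw [hνs _ (measurableSet_singleton a),
      setLIntegral_measure_zero _ _ (measure_mono_null inter_subset_left Real.volume_singleton)]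
    simp
  have hGlt : ∀ y, y < a → G y = 0 := by
    intro y hy
    rw [hG]
    simp only [Icc_eq_empty (not_le.mpr hy), measure_empty, ENNReal.toReal_zero]
  have hGb : G b = 1 := by
    rw [hG]
    simp only
    have h1 : ν (Icc a b)ᶜ = 0 := by
      rw [hνs _ measurableSet_Icc.compl, compl_inter_self]
      simp
    have h2 := measure_add_measure_compl (μ := ν) (measurableSet_Icc (a := a) (b := b))
    rw [h1, add_zero, measure_univ] at h2
    rw [h2]
    simp
  have hGle1 : ∀ y, G y ≤ 1 := by
    intro y
    rw [hG]
    simp only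
    calc (ν (Icc a y)).toReal ≤ (ν univ).toReal :=
          ENNReal.toReal_mono (hfin _) (measure_mono (subset_univ _))
      _ = 1 := by rw [measure_univ]; simp
  have hGstrict : ∀ y y', a ≤ y → y < y' → y' ≤ b → G y < G y' := by
    intro y y' h1 h2 h3
    rw [hadd y y' h1 h2.le]
    have h4 : 0 < (ν (Ioc y y')).toReal :=
      ENNReal.toReal_pos (hIocpos y y' h1 h2 h3).ne' (hfin _)
    linarith
  -- Lipschitz bound and continuity of G
  obtain ⟨tM, htM, hmaxg⟩ := isCompact_Icc.exists_isMaxOn (nonempty_Icc.mpr hab.le) hgc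
  have hMpos : 0 < g tM := hgpos tM htM
  have hGlip : ∀ y y' : ℝ, y ≤ y' → G y' - G y ≤ g tM * (y' - y) := by
    intro y y' h
    have hsub : Icc a y' ⊆ Icc a y ∪ Ioc y y' := by
      intro t ht
      rcases le_or_gt t y with h' | h'
      · exact Or.inl ⟨ht.1, h'⟩
      · exact Or.inr ⟨h', ht.2⟩
    have h1 : ν (Icc a y') ≤ ν (Icc a y) + ν (Ioc y y') :=
      le_trans (measure_mono hsub) (measure_union_le _ _)
    have h2 : ν (Ioc y y') ≤ ENNReal.ofReal (g tM) * ENNReal.ofReal (y' - y) := by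
      rw [hνs _ measurableSet_Ioc]
      calc ∫⁻ t in Ioc y y' ∩ Icc a b, ENNReal.ofReal (g t)
          ≤ ∫⁻ _ in Ioc y y' ∩ Icc a b, ENNReal.ofReal (g tM) := by
            apply setLIntegral_mono' (measurableSet_Ioc.inter measurableSet_Icc)
            intro t ht
            exact ENNReal.ofReal_le_ofReal (isMaxOn_iff.mp hmaxg t ht.2)
        _ = ENNReal.ofReal (g tM) * volume (Ioc y y' ∩ Icc a b) := by
            rw [setLIntegral_const]
        _ ≤ ENNReal.ofReal (g tM) * ENNReal.ofReal (y' - y) := by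
            gcongr
            rw [← Real.volume_Ioc (a := y) (b := y')]
            exact measure_mono inter_subset_left
    have h3 : (ν (Ioc y y')).toReal ≤ g tM * (y' - y) := by
      have h4 := ENNReal.toReal_mono
        (ENNReal.mul_ne_top ENNReal.ofReal_ne_top ENNReal.ofReal_ne_top) h2
      rwa [ENNReal.toReal_mul, ENNReal.toReal_ofReal hMpos.le,
        ENNReal.toReal_ofReal (by linarith)] at h4
    have h5 : G y' ≤ G y + (ν (Ioc y y')).toReal := by
      rw [hG]
      simp only
      calc (ν (Icc a y')).toReal ≤ (ν (Icc a y) + ν (Ioc y y')).toReal :=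
            ENNReal.toReal_mono (by
              exact ENNReal.add_ne_top.mpr ⟨hfin _, hfin _⟩) h1
        _ = (ν (Icc a y)).toReal + (ν (Ioc y y')).toReal :=
            ENNReal.toReal_add (hfin _) (hfin _)
    linarith
  have hGcont : Continuous G := by
    apply LipschitzWith.continuous (K := ⟨g tM, hMpos.le⟩)
    apply LipschitzWith.of_dist_le_mul
    intro y y'
    show dist (G y) (G y') ≤ g tM * dist y y'
    rcases le_total y y' with h | h
    · rw [Real.dist_eq, Real.dist_eq, abs_of_nonpos (sub_nonpos.mpr (hGmono h)),
        abs_of_nonpos (sub_nonpos.mpr h)]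
      have := hGlip y y' h
      linarith
    · rw [Real.dist_eq, Real.dist_eq, abs_of_nonneg (sub_nonneg.mpr (hGmono h)),
        abs_of_nonneg (sub_nonneg.mpr h)]
      have := hGlip y' y h
      linarith
  -- quantile function facts
  have hset : ∀ y, a < y → y ≤ b → {z : ℝ | G y ≤ G z} = Ici y := by
    intro y h1 h2
    have hGy0 : 0 < G y := by
      have := hGstrict a y le_rfl h1 h2
      rwa [hGa] at this
    ext z
    simp only [mem_setOf_eq, mem_Ici]
    constructor
    · intro hz
      by_contra hzy
      push_neg at hzy
      have hlt : G z < G y := by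
        rcases lt_or_ge z a with h' | h'
        · rw [hGlt z h']; exact hGy0
        · exact hGstrict z y h' hzy h2
      exact absurd hz hlt.not_ge
    · intro hz
      exact hGmono hz
  have hGinvG : ∀ y, a < y → y ≤ b → Ginv (G y) = y := by
    intro y h1 h2
    rw [hGinv]
    simp only
    rw [hset y h1 h2]
    exact csInf_Ici
  have hq : ∀ u : ℝ, 0 < u → u ≤ 1 → G (Ginv u) = u ∧ Ginv u ∈ Ioc a b := by
    intro u hu0 hu1
    have h1 : u ∈ Icc (G a) (G b) := by rw [hGa, hGb]; exact ⟨hu0.le, hu1⟩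
    obtain ⟨y, hy, hGy⟩ := intermediate_value_Icc hab.le hGcont.continuousOn h1
    have hya : a < y := by
      rcases eq_or_lt_of_le hy.1 with h' | h'
      · exfalso; rw [← h', hGa] at hGy; linarith
      · exact h'
    have h2 : Ginv u = y := by rw [← hGy]; exact hGinvG y hya hy.2
    rw [h2]
    exact ⟨hGy, hya, hy.2⟩
  -- the modified quantile function H
  let H : ℝ → ℝ := fun u => if u ≤ 0 then a else Ginv u
  have hH0 : H 0 = a := by simp only [H, if_pos le_rfl]
  have hHpos : ∀ u : ℝ, 0 < u → H u = Ginv u := by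
    intro u hu
    simp only [H, if_neg (not_le.mpr hu)]
  have hGH : ∀ u ∈ Icc (0:ℝ) 1, G (H u) = u ∧ H u ∈ Icc a b := by
    intro u hu
    rcases eq_or_lt_of_le hu.1 with h0 | h0
    · rw [← h0, hH0, hGa]
      exact ⟨rfl, left_mem_Icc.mpr hab.le⟩
    · obtain ⟨h1, h2⟩ := hq u h0 hu.2
      rw [hHpos u h0]
      exact ⟨h1, h2.1.le, h2.2⟩
  have hHmono : MonotoneOn H (Icc 0 1) := by
    intro u hu u' hu' huu
    rcases eq_or_lt_of_le hu.1 with h0 | h0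
    · rw [← h0, hH0]
      exact (hGH u' hu').2.1
    · by_contra hcon
      push_neg at hcon
      have h1 := hGstrict (H u') (H u) (hGH u' hu').2.1 hcon (hGH u hu).2.2
      rw [(hGH u hu).1, (hGH u' hu').1] at h1
      exact absurd huu h1.not_ge
  have hHimg : H '' (Icc 0 1) = Icc a b := by
    apply Subset.antisymm
    · rintro _ ⟨u, hu, rfl⟩
      exact (hGH u hu).2
    · intro y hy
      rcases eq_or_lt_of_le hy.1 with h1 | h1
      · exact ⟨0, ⟨le_rfl, zero_le_one⟩, by rw [hH0, h1]⟩
      · have hGy0 : 0 < G y := by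
          have := hGstrict a y le_rfl h1 hy.2
          rwa [hGa] at this
        refine ⟨G y, ⟨hGy0.le, hGle1 y⟩, ?_⟩
        rw [hHpos _ hGy0]
        exact hGinvG y h1 hy.2
  have hHcont : ContinuousOn H (Icc 0 1) := by
    intro u hu
    have hright : u < 1 → ContinuousWithinAt H (Ici u) u := by
      intro h1
      apply continuousWithinAt_right_of_monotoneOn_of_image_mem_nhdsWithin hHmono
        (Icc_mem_nhdsGE_of_mem ⟨hu.1, h1⟩)
      rw [hHimg]
      apply Icc_mem_nhdsGE_of_mem
      refine ⟨(hGH u hu).2.1, ?_⟩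
      rcases lt_or_eq_of_le (hGH u hu).2.2 with h | h
      · exact h
      · exfalso
        have h2 := (hGH u hu).1
        rw [h, hGb] at h2
        linarith
    have hleft : 0 < u → ContinuousWithinAt H (Iic u) u := by
      intro h0
      apply continuousWithinAt_left_of_monotoneOn_of_image_mem_nhdsWithin hHmono
        (Icc_mem_nhdsLE_of_mem ⟨h0, hu.2⟩)
      rw [hHimg]
      apply Icc_mem_nhdsLE_of_mem
      refine ⟨?_, (hGH u hu).2.2⟩
      rcases lt_or_eq_of_le (hGH u hu).2.1 with h | h
      · exact h
      · exfalso
        have h2 := (hGH u hu).1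
        rw [← h, hGa] at h2
        linarith
    rcases lt_or_eq_of_le hu.2 with h1 | h1
    · rcases eq_or_lt_of_le hu.1 with h0 | h0
      · exact (hright h1).mono (by rw [← h0]; exact Icc_subset_Ici_self)
      · exact ((hleft h0).union (hright h1)).mono
          (fun x hx => (le_total x u).imp (fun h => h) (fun h => h))
    · exact (hleft (by rw [h1]; exact one_pos)).mono (by rw [h1]; exact Icc_subset_Iic_self)
  -- position of G m
  have hGm0 : 0 < G m := by
    have := hGstrict a m le_rfl ha hb.le
    rwa [hGa] at this
  have hGm1 : G m < 1 := by
    have := hGstrict m b ha.le hb le_rfl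
    rwa [hGb] at this
  have hu₀mem : G m ∈ Ioo (0:ℝ) 1 := ⟨hGm0, hGm1⟩
  have hHu₀ : H (G m) = m := by
    rw [hHpos _ hGm0]
    exact hGinvG m ha hb.le
  have hHne : ∀ u ∈ Icc (0:ℝ) 1, u ≠ G m → H u ≠ m := by
    intro u hu hne hcon
    apply hne
    have h1 := (hGH u hu).1
    rw [hcon] at h1
    exact h1.symm
  -- the continuous Bregman exponent
  let F : ℝ → ℝ := fun u => ψ (H u) - ψ m - (H u - m) * deriv ψ m
  have hFdef : ∀ u, F u = ψ (H u) - ψ m - (H u - m) * deriv ψ m := fun _ => rfl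
  have hFcont : ContinuousOn F (Icc 0 1) := by
    exact ((hψd.continuous.comp_continuousOn hHcont).sub continuousOn_const).sub
      ((hHcont.sub continuousOn_const).mul continuousOn_const)
  have hFz : F (G m) = 0 := by rw [hFdef, hHu₀]; ring
  have hFpos : ∀ u ∈ Icc (0:ℝ) 1, u ≠ G m → 0 < F u := by
    intro u hu hne
    exact bregman_pos hψd hψc m (H u) (hHne u hu hne)
  -- B agrees with F a.e. on [0,1]
  have hae : ∀ᵐ u : ℝ ∂volume, u ≠ 0 := by
    have h1 : {u : ℝ | ¬ u ≠ 0} = {0} := by ext u; simp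
    rw [ae_iff, h1, Real.volume_singleton]
  have hBFu : ∀ u ∈ Icc (0:ℝ) 1, u ≠ 0 → B u = F u := by
    intro u hu hne
    have hu' : 0 < u := lt_of_le_of_ne hu.1 (Ne.symm hne)
    rw [hB, hFdef, hHpos u hu']
  have hBF : ∀ (ε : ℝ) (φ : ℝ → ℝ),
      (∫ u in Icc (0:ℝ) 1, φ u * Real.exp (-B u / ε))
        = ∫ u in Icc (0:ℝ) 1, φ u * Real.exp (-F u / ε) := by
    intro ε φ
    apply setIntegral_congr_ae measurableSet_Icc
    filter_upwards [hae] with u hu humem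
    rw [hBFu u humem hu]
  have hBF1 : ∀ ε : ℝ,
      (∫ u in Icc (0:ℝ) 1, Real.exp (-B u / ε))
        = ∫ u in Icc (0:ℝ) 1, Real.exp (-F u / ε) := by
    intro ε
    apply setIntegral_congr_ae measurableSet_Icc
    filter_upwards [hae] with u hu humem
    rw [hBFu u humem hu]
  -- mean convergence
  have hmean_t : Tendsto mean (𝓝[>] (0:ℝ)) (𝓝 (G m)) := by
    have h1 := laplace_ratio hFcont hu₀mem hFz hFpos (f := fun u : ℝ => u) continuous_id
    apply h1.congr
    intro ε
    rw [hmean]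
    simp only
    rw [hBF ε (fun u => u), hBF1 ε]
  refine ⟨hmean_t, ?_⟩
  -- variance convergence
  have h2 : Tendsto (fun ε => (∫ u in Icc (0:ℝ) 1, (u - G m)^2 * Real.exp (-F u / ε)) /
      ∫ u in Icc (0:ℝ) 1, Real.exp (-F u / ε)) (𝓝[>] (0:ℝ)) (𝓝 0) := by
    have := laplace_ratio hFcont hu₀mem hFz hFpos (f := fun u : ℝ => (u - G m)^2)
      (by continuity)
    simpa using this
  have hIpos : ∀ ε : ℝ, 0 < ∫ u in Icc (0:ℝ) 1, Real.exp (-F u / ε) :=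
    laplace_denom_pos hFcont
  have hwc : ∀ ε : ℝ, ContinuousOn (fun u => Real.exp (-F u / ε)) (Icc 0 1) :=
    laplace_cont hFcont
  have hmean_eq : ∀ ε : ℝ, mean ε = (∫ u in Icc (0:ℝ) 1, u * Real.exp (-F u / ε)) /
      ∫ u in Icc (0:ℝ) 1, Real.exp (-F u / ε) := by
    intro ε
    rw [hmean]
    simp only
    rw [hBF ε (fun u => u), hBF1 ε]
  -- expansion of the second moment
  have hexp : ∀ ε : ℝ, (∫ u in Icc (0:ℝ) 1, (u - mean ε)^2 * Real.exp (-F u / ε))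
      = (∫ u in Icc (0:ℝ) 1, (u - G m)^2 * Real.exp (-F u / ε))
        + ((2*(G m - mean ε)) * ((∫ u in Icc (0:ℝ) 1, u * Real.exp (-F u / ε))
            - G m * ∫ u in Icc (0:ℝ) 1, Real.exp (-F u / ε))
        + (G m - mean ε)^2 * ∫ u in Icc (0:ℝ) 1, Real.exp (-F u / ε)) := fun ε =>
    expand_second_moment _ (hwc ε) (G m) (mean ε)
  -- final algebra and limit
  have hfinal : ∀ ε : ℝ,
      (∫ u in Icc (0:ℝ) 1, (u - mean ε)^2 * Real.exp (-B u / ε))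
        / (∫ u in Icc (0:ℝ) 1, Real.exp (-B u / ε))
      = (∫ u in Icc (0:ℝ) 1, (u - G m)^2 * Real.exp (-F u / ε)) /
          (∫ u in Icc (0:ℝ) 1, Real.exp (-F u / ε))
        + ((2*(G m - mean ε)) * (mean ε - G m) + (G m - mean ε)^2) := by
    intro ε
    rw [hBF ε (fun u => (u - mean ε)^2), hBF1 ε, hexp ε, hmean_eq ε]
    have hne := (hIpos ε).ne'
    generalize (∫ u in Icc (0:ℝ) 1, (u - G m)^2 * Real.exp (-F u / ε)) = K
    generalize (∫ u in Icc (0:ℝ) 1, u * Real.exp (-F u / ε)) = J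
    generalize (∫ u in Icc (0:ℝ) 1, Real.exp (-F u / ε)) = I at hne ⊢
    field_simp
  have t1 : Tendsto (fun ε => G m - mean ε) (𝓝[>] (0:ℝ)) (𝓝 0) := by
    have := tendsto_const_nhds (x := G m) (f := 𝓝[>] (0:ℝ)) |>.sub hmean_t
    simpa using this
  have t3 : Tendsto (fun ε => mean ε - G m) (𝓝[>] (0:ℝ)) (𝓝 0) := by
    have := hmean_t.sub (tendsto_const_nhds (x := G m) (f := 𝓝[>] (0:ℝ)))
    simpa using this
  have hT : Tendsto (fun ε =>
      (∫ u in Icc (0:ℝ) 1, (u - G m)^2 * Real.exp (-F u / ε)) /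
        (∫ u in Icc (0:ℝ) 1, Real.exp (-F u / ε))
      + ((2*(G m - mean ε)) * (mean ε - G m) + (G m - mean ε)^2))
      (𝓝[>] (0:ℝ)) (𝓝 0) := by
    have := h2.add (((t1.const_mul 2).mul t3).add (t1.pow 2))
    simpa using this
  exact hT.congr (fun ε => (hfinal ε).symm)

end Main
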